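/- The receive operation preserves observational equivalence when performed at a correct server: if Δ ~ Δ' and a correct server s receives message m in both, then receive(Δ,m,s) ~ receive(Δ',m,s). -/
import Mathlib


/-- Local view of the network at one server. -/
structure NetState (Msg : Type*) where
  sent : List Msg
  received : List Msg
  pending : Multiset Msg

variable {Server Msg : Type*}

/-- `send Δ m s`: server `s` sends `m`; `m` is appended to `s`'s `sent` list and added
to the `pending` multiset of every server. -/
def send [DecidableEq Server] (Δ : Server → NetState Msg) (m : Msg) (s : Server) :
    Server → NetState Msg := fun s' =>
  if s' = s then ⟨(Δ s').sent ++ [m], (Δ s').received, (Δ s').pending + {m}⟩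
  else ⟨(Δ s').sent, (Δ s').received, (Δ s').pending + {m}⟩

/-- `receive Δ m s`: server `s` receives `m`; one copy of `m` is removed from `s`'s
`pending` multiset and `m` is appended to `s`'s `received` list. -/
def receive [DecidableEq Server] [DecidableEq Msg]
    (Δ : Server → NetState Msg) (m : Msg) (s : Server) :
    Server → NetState Msg := fun s' =>
  if s' = s then ⟨(Δ s').sent, (Δ s').received ++ [m], (Δ s').pending.erase m⟩
  else Δ s'

/-- Observational equivalence between a network `Δ` with Byzantine server set `𝔹` and a
network `Δ'` in which the single nondeterministic process `b` plays the role of all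
Byzantine servers. -/
def NetObsEq [DecidableEq Server] (𝔹 : Finset Server) (b : Server)
    (Δ Δ' : Server → NetState Msg) : Prop :=
  -- (1) they agree on all correct servers
  (∀ s, s ∉ 𝔹 → s ≠ b → Δ s = Δ' s) ∧
  -- (2) a message is sent by `b` iff it is sent by some Byzantine process
  (∑ s ∈ 𝔹, ((Δ s).sent : Multiset Msg)) = ((Δ' b).sent : Multiset Msg) ∧
  -- (3) all pending messages of `b` are pending at every Byzantine process
  (∀ s ∈ 𝔹, (Δ' b).pending ≤ (Δ s).pending) ∧
  -- (4) messages received by `b` were received by some Byzantine process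
  ((Δ' b).received : Multiset Msg) ≤ ∑ s ∈ 𝔹, ((Δ s).received : Multiset Msg) ∧
  -- (5) messages sent to a Byzantine process were also sent to `b`
  (∀ s ∈ 𝔹, ((Δ s).received : Multiset Msg) + (Δ s).pending
      = ((Δ' b).received : Multiset Msg) + (Δ' b).pending) ∧
  -- (6) messages received by a Byzantine process were received by `b`
  (∀ s ∈ 𝔹, ((Δ s).received : Multiset Msg) ≤ ((Δ' b).received : Multiset Msg))

/-- `receive` at a correct server preserves observational equivalence of networks. -/
theorem receive_correct_preserves_netObsEq [DecidableEq Server] [DecidableEq Msg]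
    (𝔹 : Finset Server) (b : Server) (Δ Δ' : Server → NetState Msg)
    (m : Msg) (s : Server) (hs𝔹 : s ∉ 𝔹) (hsb : s ≠ b)
    (hm : m ∈ (Δ s).pending) (hm' : m ∈ (Δ' s).pending)
    (heq : NetObsEq 𝔹 b Δ Δ') :
    NetObsEq 𝔹 b (receive Δ m s) (receive Δ' m s) := by
  obtain ⟨h1, h2, h3, h4, h5, h6⟩ := heq
  have hne : ∀ t, t ∈ 𝔹 ∨ t = b → receive Δ m s t = Δ t ∧ receive Δ' m s t = Δ' t := by
    intro t ht
    have hts : t ≠ s := by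
      rintro rfl
      rcases ht with ht | ht
      · exact hs𝔹 ht
      · exact hsb ht
    simp [receive, hts]
  refine ⟨?_, ?_, ?_, ?_, ?_, ?_⟩
  · intro t ht𝔹 htb
    by_cases hts : t = s
    · subst hts
      simp [receive, h1 t ht𝔹 htb]
    · simp [receive, hts, h1 t ht𝔹 htb]
  · rw [(hne b (Or.inr rfl)).2, ← h2]
    exact Finset.sum_congr rfl fun t ht => by rw [(hne t (Or.inl ht)).1]
  · intro t ht
    rw [(hne b (Or.inr rfl)).2, (hne t (Or.inl ht)).1]
    exact h3 t ht
  · rw [(hne b (Or.inr rfl)).2]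
    calc ((Δ' b).received : Multiset Msg) ≤ _ := h4
      _ = _ := (Finset.sum_congr rfl fun t ht => by rw [(hne t (Or.inl ht)).1]).symm
  · intro t ht
    rw [(hne b (Or.inr rfl)).2, (hne t (Or.inl ht)).1]
    exact h5 t ht
  · intro t ht
    rw [(hne b (Or.inr rfl)).2, (hne t (Or.inl ht)).1]
    exact h6 t ht
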